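/- Let B be a balanced bipartite graph with parts V1, V2 of size n each, where n is odd, minimum degree at least (n+1)/2, and in each part at most one vertex has degree exactly (n+1)/2. Then the forest number of B equals n + 1. -/

import Mathlib

open Finset SimpleGraph

/-- The forest number of `G`: the maximum size of a vertex subset inducing an acyclic
(induced) subgraph. -/
noncomputable def forestNum {V : Type} [Fintype V] (G : SimpleGraph V) : ℕ :=
  sSup {k | ∃ S : Finset V, S.card = k ∧ (G.induce (S : Set V)).IsAcyclic}

section Aux

lemma star_acyclic' {W : Type} [DecidableEq W] (H : SimpleGraph W) (x : W)
    (hstar : ∀ a b, H.Adj a b → a = x ∨ b = x) : H.IsAcyclic := by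
  intro v c hc
  have hx : x ∈ c.support := by
    cases c with
    | nil => exact absurd rfl hc.ne_nil
    | cons h q =>
      rcases hstar _ _ h with rfl | rfl
      · exact SimpleGraph.Walk.start_mem_support _
      · simp [SimpleGraph.Walk.support_cons]
  have hc' := hc.rotate hx
  generalize hcc : c.rotate x hx = c' at hc'
  have h3 : 3 ≤ c'.length := hc'.three_le_length
  cases c' with
  | nil => simp at h3
  | cons h1 q =>
    cases q with
    | nil => simp at h3
    | cons h2 r =>
      rcases hstar _ _ h2 with rfl | rfl
      · exact h1.ne rfl
      · cases r with
        | nil => simp [SimpleGraph.Walk.length_cons] at h3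
        | cons h3' r3 =>
          have hnd := hc'.2
          simp only [SimpleGraph.Walk.support_cons, List.tail_cons, List.nodup_cons] at hnd
          exact hnd.2.1 (SimpleGraph.Walk.end_mem_support r3)

lemma exists_leaf' {W : Type} [Fintype W] [DecidableEq W] (H : SimpleGraph W) [DecidableRel H.Adj]
    (hac : H.IsAcyclic) (hne : Nonempty W) : ∃ v, H.degree v ≤ 1 := by
  by_contra hcon
  push_neg at hcon
  obtain ⟨w⟩ := hne
  have : Nonempty (Σ u : W, Σ v : W, H.Path u v) := ⟨⟨w, w, SimpleGraph.Path.nil⟩⟩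
  obtain ⟨P, -, hmax⟩ := Finset.exists_max_image (Finset.univ (α := Σ u : W, Σ v : W, H.Path u v))
    (fun P => P.2.2.val.length) Finset.univ_nonempty
  obtain ⟨u, v, p⟩ := P
  have hnb : ∀ y, H.Adj u y → y ∈ p.val.support := by
    intro y hy
    by_contra hys
    have hp' : (p.val.cons hy.symm).IsPath := p.prop.cons hys
    have := hmax ⟨y, v, ⟨_, hp'⟩⟩ (Finset.mem_univ _)
    simp [SimpleGraph.Walk.length_cons] at this
  have hdeg := hcon u
  rw [← SimpleGraph.card_neighborFinset_eq_degree] at hdeg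
  obtain ⟨y1, hy1, y2, hy2, hne12⟩ := Finset.one_lt_card.mp hdeg
  rw [SimpleGraph.mem_neighborFinset] at hy1 hy2
  cases hp : p.val with
  | nil =>
    have := hnb y1 hy1
    rw [hp] at this
    simp at this
    exact hy1.ne' (by rw [this])
  | cons h q =>
    rename_i x
    have key : ∀ y, H.Adj u y → y ≠ x → False := by
      intro y hy hyx
      have hmem : y ∈ p.val.support := hnb y hy
      rw [hp] at hmem
      have hq : y ∈ q.support := by
        rcases (SimpleGraph.Walk.mem_support_iff _).mp hmem with h' | h'
        · exact absurd h'.symm hy.ne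
        · simpa using h'
      have hpp := p.prop
      rw [hp] at hpp
      have hqp : q.IsPath := hpp.of_cons
      have hu : u ∉ q.support := by
        rw [SimpleGraph.Walk.cons_isPath_iff] at hpp
        exact hpp.2
      have htp : (q.takeUntil y hq).IsPath := hqp.takeUntil hq
      have hu' : u ∉ (q.takeUntil y hq).support :=
        fun hmem' => hu (SimpleGraph.Walk.support_takeUntil_subset _ hq hmem')
      have path2 : ((q.takeUntil y hq).cons h).IsPath := htp.cons hu'
      have := hac.path_unique (SimpleGraph.Path.singleton hy) ⟨_, path2⟩
      have hlen : (SimpleGraph.Path.singleton hy).val.length = ((q.takeUntil y hq).cons h).length := by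
        rw [this]
      simp [SimpleGraph.Path.singleton, SimpleGraph.Walk.length_cons] at hlen
      have : x = y := hlen
      exact hyx this.symm
    rcases eq_or_ne y1 x with rfl | h1
    · exact key y2 hy2 (fun hh => hne12 (hh ▸ rfl))
    · exact key y1 hy1 h1

lemma acyclic_mono' {V : Type} {G : SimpleGraph V} {s t : Set V} (hst : s ⊆ t)
    (h : (G.induce t).IsAcyclic) : (G.induce s).IsAcyclic := by
  intro v c hc
  exact h ((c.map (G.induceHomOfLE hst).toHom)) (hc.map (G.induceHomOfLE hst).injective)

variable {V : Type} [Fintype V] [DecidableEq V] (G : SimpleGraph V) [DecidableRel G.Adj]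

instance indDec' (S : Finset V) : DecidableRel (G.induce (S : Set V)).Adj :=
  fun a b => ‹DecidableRel G.Adj› a.1 b.1

lemma induce_degree' (S : Finset V) (v : V) (hv : v ∈ S) :
    (G.induce (S : Set V)).degree ⟨v, by simpa using hv⟩ = (S.filter (fun u => G.Adj v u)).card := by
  rw [← SimpleGraph.card_neighborFinset_eq_degree]
  apply Finset.card_bij (fun (a : ↥(S : Set V)) _ => (a : V))
  · intro a ha
    simp only [SimpleGraph.mem_neighborFinset] at ha
    simp only [Finset.mem_filter]
    refine ⟨by simpa using a.2, ha⟩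
  · intro a _ b _ hab
    exact Subtype.ext hab
  · intro b hb
    simp only [Finset.mem_filter] at hb
    refine ⟨⟨b, by simpa using hb.1⟩, ?_, rfl⟩
    simp [SimpleGraph.mem_neighborFinset]
    exact hb.2

lemma forest_count' (S : Finset V) (hac : (G.induce (S : Set V)).IsAcyclic) (hne : S.Nonempty) :
    (∑ v ∈ S, ((S.filter (fun u => G.Adj v u)).card : ℤ)) ≤ 2 * S.card - 2 := by
  induction S using Finset.strongInduction with
  | _ S IH =>
    have hneW : Nonempty ↥(S : Set V) := by
      obtain ⟨x, hx⟩ := hne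
      exact ⟨⟨x, by simpa using hx⟩⟩
    obtain ⟨⟨v, hvS'⟩, hdeg⟩ := exists_leaf' (G.induce (S : Set V)) hac hneW
    have hvS : v ∈ S := by simpa using hvS'
    have hdv : (S.filter (fun u => G.Adj v u)).card ≤ 1 := by
      rw [← induce_degree' G S v hvS]; exact hdeg
    set S' := S.erase v with hS'
    have hsub : S' ⊆ S := Finset.erase_subset _ _
    have hcard : (S'.card : ℤ) = S.card - 1 := by
      rw [Finset.card_erase_of_mem hvS]
      have : 1 ≤ S.card := Finset.card_pos.mpr hne
      push_cast [Nat.cast_sub this]; ring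
    have hfil : ∀ w, ((S.filter (fun u => G.Adj w u)).card : ℤ)
        = (S'.filter (fun u => G.Adj w u)).card + (if G.Adj w v then 1 else 0) := by
      intro w
      rw [hS', Finset.filter_erase]
      by_cases h : G.Adj w v
      · rw [Finset.card_erase_of_mem (by simp [h, hvS])]
        have : 1 ≤ (S.filter (fun u => G.Adj w u)).card :=
          Finset.card_pos.mpr ⟨v, by simp [h, hvS]⟩
        push_cast [Nat.cast_sub this]
        simp [h]
      · rw [Finset.erase_eq_of_notMem (by simp [h])]
        simp [h]
    have hsplit : (∑ w ∈ S, ((S.filter (fun u => G.Adj w u)).card : ℤ))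
        = (∑ w ∈ S', ((S'.filter (fun u => G.Adj w u)).card : ℤ))
          + 2 * (S.filter (fun u => G.Adj v u)).card := by
      rw [← Finset.add_sum_erase _ _ hvS, ← hS']
      have h1 : ∀ w ∈ S', ((S.filter (fun u => G.Adj w u)).card : ℤ)
          = (S'.filter (fun u => G.Adj w u)).card + (if G.Adj w v then 1 else 0) :=
        fun w _ => hfil w
      rw [Finset.sum_congr rfl h1, Finset.sum_add_distrib]
      have h2 : (∑ w ∈ S', (if G.Adj w v then (1:ℤ) else 0)) = (S'.filter (fun w => G.Adj w v)).card := by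
        simp [Finset.sum_ite, Finset.sum_const]
      have h3 : (S'.filter (fun w => G.Adj w v)).card = (S'.filter (fun u => G.Adj v u)).card := by
        congr 1; apply Finset.filter_congr; intro x _; simp [SimpleGraph.adj_comm]
      have h4 : ((S'.filter (fun u => G.Adj v u)).card : ℤ) = (S.filter (fun u => G.Adj v u)).card := by
        rw [hfil v]; simp
      rw [h2, h3, hfil v]
      simp only [SimpleGraph.irrefl, if_false]
      rw [h4]
      push_cast [← h4]
      ring
    rw [hsplit]
    rcases Finset.eq_empty_or_nonempty S' with hemp | hne'
    · have hS1 : S.card = 1 := by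
        have := hcard; rw [hemp] at this; simp at this; omega
      obtain ⟨a, ha⟩ := Finset.card_eq_one.mp hS1
      have hav : a = v := by
        have h5 := hvS; rw [ha] at h5; simp at h5; exact h5.symm
      have hfe : (S.filter (fun u => G.Adj v u)) = ∅ := by
        rw [ha, hav]
        ext x
        simp only [Finset.mem_filter, Finset.mem_singleton, Finset.notMem_empty, iff_false]
        rintro ⟨rfl, h⟩
        exact G.irrefl h
      rw [hfe]
      have hsum0 : (∑ w ∈ S', ((S'.filter (fun u => G.Adj w u)).card : ℤ)) = 0 := by
        simp [hemp]
      rw [hsum0, hS1]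
      norm_num
    · have hac' : (G.induce (S' : Set V)).IsAcyclic :=
        acyclic_mono' (by exact_mod_cast Finset.coe_subset.mpr hsub) hac
      have hIH := IH S' (Finset.erase_ssubset hvS) hac' hne'
      have : ((S.filter (fun u => G.Adj v u)).card : ℤ) ≤ 1 := by exact_mod_cast hdv
      rw [hcard] at hIH
      linarith

lemma swap_sum' (A B : Finset V) :
    ∑ v ∈ A, ((B.filter (fun u => G.Adj v u)).card : ℤ)
      = ∑ u ∈ B, ((A.filter (fun w => G.Adj u w)).card : ℤ) := by
  have h : ∀ (X Y : Finset V), ∑ v ∈ X, ((Y.filter (fun u => G.Adj v u)).card : ℤ)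
      = ∑ v ∈ X, ∑ u ∈ Y, (if G.Adj v u then (1:ℤ) else 0) := by
    intro X Y
    refine Finset.sum_congr rfl fun v _ => ?_
    rw [Finset.sum_ite, Finset.sum_const, Finset.sum_const]
    simp
  rw [h, h, Finset.sum_comm]
  refine Finset.sum_congr rfl fun u _ => Finset.sum_congr rfl fun v _ => ?_
  simp only [SimpleGraph.adj_comm]

lemma arith' (n a b : ℤ) (hab : n + 2 ≤ a + b) (hbn : b ≤ n) (h2b : n + 3 ≤ 2*b)
    (hkey : a * (2*b - n + 3) - 2 ≤ 2*(a + b) - 2) : False := by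
  nlinarith [mul_nonneg (by linarith : (0:ℤ) ≤ n - b) (by linarith : (0:ℤ) ≤ 2*b - n - 3),
    mul_nonneg (by linarith : (0:ℤ) ≤ a - (n + 2 - b)) (by linarith : (0:ℤ) ≤ 2*b - n + 1)]

lemma F_lb' (n : ℕ) (hodd : Odd n) (W1 W2 A B : Finset V) (hA : A ⊆ W1) (hB : B ⊆ W2)
    (hW2 : W2.card = n)
    (hnb : ∀ v ∈ W1, ∀ u, G.Adj v u → u ∈ W2)
    (hdeg : ∀ v, n + 1 ≤ 2 * G.degree v)
    (hfew : (W1.filter fun v => 2 * G.degree v = n + 1).card ≤ 1) :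
    (A.card : ℤ) * (2 * B.card - n + 3) - 2 ≤ 2 * ∑ v ∈ A, ((B.filter (fun u => G.Adj v u)).card : ℤ) := by
  obtain ⟨m, hm⟩ := hodd
  have hper : ∀ v ∈ A, (G.degree v : ℤ) - ((n : ℤ) - B.card) ≤ (B.filter (fun u => G.Adj v u)).card := by
    intro v hv
    have hNsub : G.neighborFinset v ⊆ W2 := fun u hu =>
      hnb v (hA hv) u (by rwa [SimpleGraph.mem_neighborFinset] at hu)
    have hBfil : B.filter (fun u => G.Adj v u) = G.neighborFinset v ∩ B := by
      ext u; simp [SimpleGraph.mem_neighborFinset, And.comm]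
    have hsplit : (G.neighborFinset v ∩ B).card + (G.neighborFinset v \ B).card = G.degree v := by
      rw [Finset.card_inter_add_card_sdiff]
      rfl
    have hsd : (G.neighborFinset v \ B).card ≤ (W2 \ B).card :=
      Finset.card_le_card (Finset.sdiff_subset_sdiff hNsub le_rfl)
    have hW2B : (W2 \ B).card = n - B.card := by rw [Finset.card_sdiff_of_subset hB, hW2]
    have hBle : B.card ≤ n := hW2 ▸ Finset.card_le_card hB
    rw [hBfil]
    have := hsplit
    zify at hsd hW2B this ⊢
    rw [Nat.cast_sub hBle] at hW2B
    linarith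
  have hdegsum : (A.card : ℤ) * (n + 3) - 2 ≤ ∑ v ∈ A, 2 * (G.degree v : ℤ) := by
    set A0 := A.filter (fun v => 2 * G.degree v = n + 1) with hA0
    have hc0 : A0.card ≤ 1 := le_trans (Finset.card_le_card
      (Finset.filter_subset_filter _ hA)) hfew
    have hsub : A0 ⊆ A := Finset.filter_subset _ _
    have hsplit : ∑ v ∈ A, 2 * (G.degree v : ℤ)
        = ∑ v ∈ A0, 2 * (G.degree v : ℤ) + ∑ v ∈ A \ A0, 2 * (G.degree v : ℤ) := by
      rw [hA0, ← Finset.filter_not, Finset.sum_filter_add_sum_filter_not]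
    have hb0 : ∀ v ∈ A0, ((n:ℤ) + 1) ≤ 2 * (G.degree v : ℤ) := by
      intro v _; exact_mod_cast hdeg v
    have hb1 : ∀ v ∈ A \ A0, ((n:ℤ) + 3) ≤ 2 * (G.degree v : ℤ) := by
      intro v hv
      simp only [hA0, Finset.mem_sdiff, Finset.mem_filter] at hv
      have h1 := hdeg v
      have h2 : ¬ (2 * G.degree v = n + 1) := fun h => hv.2 ⟨hv.1, h⟩
      have : n + 3 ≤ 2 * G.degree v := by omega
      exact_mod_cast this
    have hs0 : (A0.card : ℤ) * ((n:ℤ) + 1) ≤ ∑ v ∈ A0, 2 * (G.degree v : ℤ) := by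
      have := Finset.card_nsmul_le_sum A0 (fun v => 2 * (G.degree v : ℤ)) ((n:ℤ)+1) hb0
      rw [nsmul_eq_mul] at this
      linarith [this]
    have hs1 : ((A \ A0).card : ℤ) * ((n:ℤ) + 3) ≤ ∑ v ∈ A \ A0, 2 * (G.degree v : ℤ) := by
      have := Finset.card_nsmul_le_sum (A \ A0) (fun v => 2 * (G.degree v : ℤ)) ((n:ℤ)+3) hb1
      rw [nsmul_eq_mul] at this
      linarith [this]
    have hcsd : ((A \ A0).card : ℤ) = A.card - A0.card := by
      rw [Finset.card_sdiff_of_subset hsub]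
      have := Finset.card_le_card hsub
      push_cast [Nat.cast_sub this]
      ring
    have hc0' : (A0.card : ℤ) ≤ 1 := by exact_mod_cast hc0
    rw [hsplit]
    rw [hcsd] at hs1
    nlinarith [hs0, hs1, hc0']
  have h1 : ∑ v ∈ A, ((G.degree v : ℤ) - ((n:ℤ) - B.card)) ≤ ∑ v ∈ A, ((B.filter (fun u => G.Adj v u)).card : ℤ) :=
    Finset.sum_le_sum hper
  rw [Finset.sum_sub_distrib, Finset.sum_const, nsmul_eq_mul] at h1
  have h3 : (A.card:ℤ) * (2*B.card - n + 3) - 2 = ((A.card:ℤ)*(n+3) - 2) - 2*(A.card * ((n:ℤ) - B.card)) := by ring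
  have h2 : (∑ v ∈ A, (G.degree v : ℤ)) * 2 = ∑ v ∈ A, 2 * (G.degree v : ℤ) := by
    rw [Finset.sum_mul]; exact Finset.sum_congr rfl fun _ _ => by ring
  nlinarith [h1, hdegsum, h2, h3]

end Aux

theorem stmt13 {V : Type} [Fintype V] [DecidableEq V] (G : SimpleGraph V)
    [DecidableRel G.Adj] (n : ℕ) (hodd : Odd n) (V1 V2 : Finset V)
    (hdisj : Disjoint V1 V2) (hunion : V1 ∪ V2 = Finset.univ)
    (hc1 : V1.card = n) (hc2 : V2.card = n)
    (hbip : ∀ u v, G.Adj u v → (u ∈ V1 ∧ v ∈ V2) ∨ (u ∈ V2 ∧ v ∈ V1))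
    (hdeg : ∀ v, n + 1 ≤ 2 * G.degree v)
    (hfew1 : (V1.filter fun v => 2 * G.degree v = n + 1).card ≤ 1)
    (hfew2 : (V2.filter fun v => 2 * G.degree v = n + 1).card ≤ 1) :
    forestNum G = n + 1 := by
  obtain ⟨m, hm⟩ := hodd
  have hnb1 : ∀ v ∈ V1, ∀ u, G.Adj v u → u ∈ V2 := by
    intro v hv u hadj
    rcases hbip v u hadj with ⟨_, h⟩ | ⟨h, _⟩
    · exact h
    · exact absurd hv (Finset.disjoint_right.mp hdisj h)
  have hnb2 : ∀ v ∈ V2, ∀ u, G.Adj v u → u ∈ V1 := by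
    intro v hv u hadj
    rcases hbip v u hadj with ⟨h, _⟩ | ⟨_, h⟩
    · exact absurd hv (Finset.disjoint_left.mp hdisj h)
    · exact h
  -- upper bound
  have hub : ∀ S : Finset V, (G.induce (S : Set V)).IsAcyclic → S.card ≤ n + 1 := by
    intro S hac
    by_contra hcon
    push_neg at hcon
    set A := S ∩ V1 with hA
    set B := S ∩ V2 with hB
    have hAsub : A ⊆ V1 := Finset.inter_subset_right
    have hBsub : B ⊆ V2 := Finset.inter_subset_right
    have hSAB : S = A ∪ B := by
      rw [hA, hB, ← Finset.inter_union_distrib_left, hunion, Finset.inter_univ]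
    have hdAB : Disjoint A B :=
      Finset.disjoint_of_subset_left hAsub (Finset.disjoint_of_subset_right hBsub hdisj)
    have hcardAB : A.card + B.card = S.card := by
      rw [hSAB, Finset.card_union_of_disjoint hdAB]
    have hne : S.Nonempty := Finset.card_pos.mp (by omega)
    have hE := forest_count' G S hac hne
    -- split sum according to parts
    have hfilA : ∀ v ∈ A, S.filter (fun u => G.Adj v u) = B.filter (fun u => G.Adj v u) := by
      intro v hv
      ext u
      simp only [Finset.mem_filter, hB, Finset.mem_inter]
      constructor
      · rintro ⟨hu, hadj⟩
        exact ⟨⟨hu, hnb1 v (hAsub hv) u hadj⟩, hadj⟩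
      · rintro ⟨⟨hu, _⟩, hadj⟩
        exact ⟨hu, hadj⟩
    have hfilB : ∀ v ∈ B, S.filter (fun u => G.Adj v u) = A.filter (fun u => G.Adj v u) := by
      intro v hv
      ext u
      simp only [Finset.mem_filter, hA, Finset.mem_inter]
      constructor
      · rintro ⟨hu, hadj⟩
        exact ⟨⟨hu, hnb2 v (hBsub hv) u hadj⟩, hadj⟩
      · rintro ⟨⟨hu, _⟩, hadj⟩
        exact ⟨hu, hadj⟩
    have hEsplit : (∑ v ∈ S, ((S.filter (fun u => G.Adj v u)).card : ℤ))
        = (∑ v ∈ A, ((B.filter (fun u => G.Adj v u)).card : ℤ))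
          + (∑ v ∈ B, ((A.filter (fun u => G.Adj v u)).card : ℤ)) := by
      rw [hSAB, Finset.sum_union hdAB, ← hSAB]
      congr 1
      · exact Finset.sum_congr rfl fun v hv => by rw [hfilA v hv]
      · exact Finset.sum_congr rfl fun v hv => by rw [hfilB v hv]
    have hswap := swap_sum' G A B
    have hFA : 2 * (∑ v ∈ A, ((B.filter (fun u => G.Adj v u)).card : ℤ)) ≤ 2 * (A.card + B.card) - 2 := by
      rw [two_mul]
      nth_rewrite 2 [hswap]
      rw [← hEsplit]
      rw [← hcardAB] at hE
      push_cast at hE ⊢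
      linarith
    have hAn : A.card ≤ n := hc1 ▸ Finset.card_le_card hAsub
    have hBn : B.card ≤ n := hc2 ▸ Finset.card_le_card hBsub
    have habn : n + 2 ≤ A.card + B.card := by omega
    rcases le_or_gt A.card B.card with hab | hab
    · have h2b : n + 3 ≤ 2 * B.card := by omega
      have hlb := F_lb' G n ⟨m, hm⟩ V1 V2 A B hAsub hBsub hc2 hnb1 hdeg hfew1
      refine arith' n A.card B.card (by exact_mod_cast habn) (by exact_mod_cast hBn)
        (by exact_mod_cast h2b) ?_
      have : (A.card : ℤ) * (2 * B.card - n + 3) - 2 ≤ 2 * ((A.card : ℤ) + B.card) - 2 := by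
        calc (A.card : ℤ) * (2 * B.card - n + 3) - 2
            ≤ 2 * ∑ v ∈ A, ((B.filter (fun u => G.Adj v u)).card : ℤ) := hlb
          _ ≤ 2 * ((A.card : ℤ) + B.card) - 2 := by push_cast at hFA ⊢; linarith
      exact this
    · have h2a : n + 3 ≤ 2 * A.card := by omega
      have hlb := F_lb' G n ⟨m, hm⟩ V2 V1 B A hBsub hAsub hc1 hnb2 hdeg hfew2
      refine arith' n B.card A.card (by exact_mod_cast (by omega : n + 2 ≤ B.card + A.card))
        (by exact_mod_cast hAn) (by exact_mod_cast h2a) ?_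
      have hFB : 2 * (∑ v ∈ B, ((A.filter (fun u => G.Adj v u)).card : ℤ))
          ≤ 2 * ((B.card : ℤ) + A.card) - 2 := by
        rw [two_mul]
        nth_rewrite 1 [← hswap]
        rw [← hEsplit]
        rw [← hcardAB] at hE
        push_cast at hE ⊢
        linarith
      calc (B.card : ℤ) * (2 * A.card - n + 3) - 2
          ≤ 2 * ∑ v ∈ B, ((A.filter (fun u => G.Adj v u)).card : ℤ) := hlb
        _ ≤ 2 * ((B.card : ℤ) + A.card) - 2 := hFB
  -- lower bound witness
  have hV2ne : V2.Nonempty := Finset.card_pos.mp (by omega)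
  obtain ⟨u, hu⟩ := hV2ne
  have huV1 : u ∉ V1 := Finset.disjoint_right.mp hdisj hu
  set S0 : Finset V := insert u V1 with hS0
  have hS0card : S0.card = n + 1 := by
    rw [hS0, Finset.card_insert_of_notMem huV1, hc1]
  have huS0 : u ∈ S0 := Finset.mem_insert_self _ _
  have hS0ac : (G.induce (S0 : Set V)).IsAcyclic := by
    apply star_acyclic' _ (⟨u, by simpa using huS0⟩ : ↥(S0 : Set V))
    rintro ⟨a, ha⟩ ⟨b, hb⟩ hadj
    have hadj' : G.Adj a b := hadj
    have hmem : ∀ x, x ∈ S0 → x ∈ V2 → x = u := by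
      intro x hxS hxV2
      rcases Finset.mem_insert.mp hxS with h | h
      · exact h
      · exact absurd hxV2 (Finset.disjoint_left.mp hdisj h)
    rcases hbip a b hadj' with ⟨_, hb2⟩ | ⟨ha2, _⟩
    · right
      exact Subtype.ext (hmem b (by simpa using hb) hb2)
    · left
      exact Subtype.ext (hmem a (by simpa using ha) ha2)
  -- compute the sSup
  have hmem : (n + 1) ∈ {k | ∃ S : Finset V, S.card = k ∧ (G.induce (S : Set V)).IsAcyclic} :=
    ⟨S0, hS0card, hS0ac⟩
  have hbdd : ∀ k ∈ {k | ∃ S : Finset V, S.card = k ∧ (G.induce (S : Set V)).IsAcyclic}, k ≤ n + 1 := by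
    rintro k ⟨S, rfl, hac⟩
    exact hub S hac
  rw [forestNum]
  exact le_antisymm (csSup_le ⟨n + 1, hmem⟩ hbdd) (le_csSup ⟨n + 1, hbdd⟩ hmem)
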